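/- Let T be a weighted type graph over a commutative semiring S and define the weight of a graph G as w_T(G) = Σ_{t : G → T} w_T(t), the sum over all typing morphisms. If G is the pushout of G₁ and G₂ along a discrete graph G₀ with morphisms ψ₁, ψ₂, then w_T(G) = Σ_{t₀ : G₀ → T} ( Σ_{t₁ : G₁ → T, t₁∘ψ₁ = t₀} w_T(t₁) ) ⊗ ( Σ_{t₂ : G₂ → T, t₂∘ψ₂ = t₀} w_T(t₂) ). -/

import Mathlib

structure LabeledGraph (Λ : Type) where
  V : Type
  E : Type
  src : E → V
  tgt : E → V
  lab : E → Λ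

@[ext]
structure GraphHom {Λ : Type} (G H : LabeledGraph Λ) where
  fV : G.V → H.V
  fE : G.E → H.E
  src_eq : ∀ e, H.src (fE e) = fV (G.src e)
  tgt_eq : ∀ e, H.tgt (fE e) = fV (G.tgt e)
  lab_eq : ∀ e, H.lab (fE e) = G.lab e

def GraphHom.comp {Λ : Type} {G H K : LabeledGraph Λ} (g : GraphHom H K) (f : GraphHom G H) :
    GraphHom G K where
  fV := g.fV ∘ f.fV
  fE := g.fE ∘ f.fE
  src_eq e := by simp [g.src_eq, f.src_eq]
  tgt_eq e := by simp [g.tgt_eq, f.tgt_eq]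
  lab_eq e := by simp [g.lab_eq, f.lab_eq]

/-- The pushout property via the universal property in the category of graphs. -/
def IsGraphPushout {Λ : Type} {G₀ G₁ G₂ G : LabeledGraph Λ}
    (ψ₁ : GraphHom G₀ G₁) (ψ₂ : GraphHom G₀ G₂)
    (φ₁ : GraphHom G₁ G) (φ₂ : GraphHom G₂ G) : Prop :=
  φ₁.comp ψ₁ = φ₂.comp ψ₂ ∧
    ∀ (T : LabeledGraph Λ) (t₁ : GraphHom G₁ T) (t₂ : GraphHom G₂ T),
      t₁.comp ψ₁ = t₂.comp ψ₂ →
        ∃! t : GraphHom G T, t.comp φ₁ = t₁ ∧ t.comp φ₂ = t₂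


/-- The weight of a typing morphism: product of the weights of the images of all edges. -/
def weight {Λ : Type} {S : Type*} [CommSemiring S] {D T : LabeledGraph Λ} [Fintype D.E]
    (w : T.E → S) (t : GraphHom D T) : S :=
  ∏ e : D.E, w (t.fE e)

section Aux

variable {Λ : Type}

def GraphHom.id' (G : LabeledGraph Λ) : GraphHom G G :=
  ⟨_root_.id, _root_.id, fun _ => rfl, fun _ => rfl, fun _ => rfl⟩

lemma GraphHom.comp_assoc {G H K L : LabeledGraph Λ} (h : GraphHom K L) (g : GraphHom H K)
    (f : GraphHom G H) : (h.comp g).comp f = h.comp (g.comp f) := rfl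

variable {G₀ G₁ G₂ G : LabeledGraph Λ}
  (φ₁ : GraphHom G₁ G) (φ₂ : GraphHom G₂ G)

/-- Auxiliary graph with the same vertices as `G` but edge set `G₁.E ⊕ G₂.E`. -/
def auxGraph : LabeledGraph Λ where
  V := G.V
  E := G₁.E ⊕ G₂.E
  src := Sum.elim (φ₁.fV ∘ G₁.src) (φ₂.fV ∘ G₂.src)
  tgt := Sum.elim (φ₁.fV ∘ G₁.tgt) (φ₂.fV ∘ G₂.tgt)
  lab := Sum.elim G₁.lab G₂.lab

def auxK : GraphHom (auxGraph φ₁ φ₂) G where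
  fV := _root_.id
  fE := Sum.elim φ₁.fE φ₂.fE
  src_eq e := by cases e with
    | inl e => exact φ₁.src_eq e
    | inr e => exact φ₂.src_eq e
  tgt_eq e := by cases e with
    | inl e => exact φ₁.tgt_eq e
    | inr e => exact φ₂.tgt_eq e
  lab_eq e := by cases e with
    | inl e => exact φ₁.lab_eq e
    | inr e => exact φ₂.lab_eq e

def auxIncl₁ : GraphHom G₁ (auxGraph φ₁ φ₂) :=
  ⟨φ₁.fV, Sum.inl, fun _ => rfl, fun _ => rfl, fun _ => rfl⟩

def auxIncl₂ : GraphHom G₂ (auxGraph φ₁ φ₂) :=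
  ⟨φ₂.fV, Sum.inr, fun _ => rfl, fun _ => rfl, fun _ => rfl⟩

/-- Multiplicativity of the weight of a typing morphism of a pushout over a
discrete graph. -/
lemma weight_mul {S : Type*} [CommSemiring S] {T : LabeledGraph Λ}
    [Fintype G.E] [Fintype G₁.E] [Fintype G₂.E]
    (hdiscrete : IsEmpty G₀.E)
    (ψ₁ : GraphHom G₀ G₁) (ψ₂ : GraphHom G₀ G₂)
    (hpo : IsGraphPushout ψ₁ ψ₂ φ₁ φ₂)
    (w : T.E → S) (s : GraphHom G T) :
    weight w s = weight w (s.comp φ₁) * weight w (s.comp φ₂) := by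
  have hcone : (auxIncl₁ φ₁ φ₂).comp ψ₁ = (auxIncl₂ φ₁ φ₂).comp ψ₂ := by
    have hV : φ₁.fV ∘ ψ₁.fV = φ₂.fV ∘ ψ₂.fV := congrArg GraphHom.fV hpo.1
    apply GraphHom.ext
    · exact hV
    · exact funext fun e => hdiscrete.elim e
  obtain ⟨t, ⟨ht1, ht2⟩, -⟩ := hpo.2 (auxGraph φ₁ φ₂) (auxIncl₁ φ₁ φ₂) (auxIncl₂ φ₁ φ₂) hcone
  obtain ⟨u, -, huniq⟩ := hpo.2 G φ₁ φ₂ hpo.1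
  have h1 : (auxK φ₁ φ₂).comp t = u := by
    apply huniq
    constructor
    · rw [GraphHom.comp_assoc, ht1]; apply GraphHom.ext <;> rfl
    · rw [GraphHom.comp_assoc, ht2]; apply GraphHom.ext <;> rfl
  have h2 : GraphHom.id' G = u := by
    apply huniq
    constructor <;> (apply GraphHom.ext <;> rfl)
  have hkt : (auxK φ₁ φ₂).comp t = GraphHom.id' G := h1.trans h2.symm
  let e : G.E ≃ (G₁.E ⊕ G₂.E) :=
    { toFun := t.fE
      invFun := (auxK φ₁ φ₂).fE
      left_inv := fun x => congrFun (congrArg GraphHom.fE hkt) x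
      right_inv := fun x => by
        cases x with
        | inl a => exact congrFun (congrArg GraphHom.fE ht1) a
        | inr a => exact congrFun (congrArg GraphHom.fE ht2) a }
  have h1 : weight w s = ∏ x : G₁.E ⊕ G₂.E, w (s.fE (e.symm x)) := by
    rw [weight, ← Equiv.prod_comp e.symm (fun a => w (s.fE a))]
  rw [h1, Fintype.prod_sum_type]
  rfl

end Aux

theorem stmt_14 {Λ : Type} {S : Type*} [CommSemiring S]
    {G₀ G₁ G₂ G T : LabeledGraph Λ}
    [Fintype G.E] [Fintype G₁.E] [Fintype G₂.E]
    [Fintype (GraphHom G T)] [Fintype (GraphHom G₁ T)] [Fintype (GraphHom G₂ T)]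
    [Fintype (GraphHom G₀ T)] [DecidableEq (GraphHom G₀ T)]
    (hdiscrete : IsEmpty G₀.E)
    (ψ₁ : GraphHom G₀ G₁) (ψ₂ : GraphHom G₀ G₂)
    (φ₁ : GraphHom G₁ G) (φ₂ : GraphHom G₂ G)
    (hpo : IsGraphPushout ψ₁ ψ₂ φ₁ φ₂)
    (w : T.E → S) :
    ∑ t : GraphHom G T, weight w t =
      ∑ t₀ : GraphHom G₀ T,
        (∑ t₁ ∈ Finset.univ.filter (fun t₁ : GraphHom G₁ T => t₁.comp ψ₁ = t₀),
            weight w t₁) *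
          ∑ t₂ ∈ Finset.univ.filter (fun t₂ : GraphHom G₂ T => t₂.comp ψ₂ = t₀),
            weight w t₂ := by
  classical
  set P : Finset (GraphHom G₁ T × GraphHom G₂ T) :=
    Finset.univ.filter (fun p => p.1.comp ψ₁ = p.2.comp ψ₂) with hP
  have hL : ∑ t : GraphHom G T, weight w t =
      ∑ p ∈ P, weight w p.1 * weight w p.2 := by
    refine Finset.sum_bij' (fun s _ => (s.comp φ₁, s.comp φ₂))
      (fun p hp => (hpo.2 T p.1 p.2 (by simpa [hP] using hp)).choose) ?_ ?_ ?_ ?_ ?_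
    · intro s _
      simp only [hP, Finset.mem_filter, Finset.mem_univ, true_and]
      rw [GraphHom.comp_assoc, GraphHom.comp_assoc, hpo.1]
    · intro p hp; exact Finset.mem_univ _
    · intro s hs
      exact ((hpo.2 T (s.comp φ₁) (s.comp φ₂)
        (by rw [GraphHom.comp_assoc, GraphHom.comp_assoc, hpo.1])).choose_spec.2
        s ⟨rfl, rfl⟩).symm
    · intro p hp
      have h := (hpo.2 T p.1 p.2 (by simpa [hP] using hp)).choose_spec
      exact Prod.ext h.1.1 h.1.2
    · intro s _; exact weight_mul φ₁ φ₂ hdiscrete ψ₁ ψ₂ hpo w s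
  rw [hL]
  have hR : ∀ t₀ : GraphHom G₀ T,
      ((∑ t₁ ∈ Finset.univ.filter (fun t₁ : GraphHom G₁ T => t₁.comp ψ₁ = t₀), weight w t₁) *
        ∑ t₂ ∈ Finset.univ.filter (fun t₂ : GraphHom G₂ T => t₂.comp ψ₂ = t₀), weight w t₂) =
      ∑ p ∈ P.filter (fun p => p.1.comp ψ₁ = t₀), weight w p.1 * weight w p.2 := by
    intro t₀
    rw [Finset.sum_mul_sum]
    rw [← Finset.sum_product']
    apply Finset.sum_congr _ (fun _ _ => rfl)
    ext p
    simp only [hP, Finset.mem_product, Finset.mem_filter, Finset.mem_univ, true_and]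
    constructor
    · rintro ⟨h1, h2⟩
      exact ⟨h1.trans h2.symm, h1⟩
    · rintro ⟨h1, h2⟩
      exact ⟨h2, h1 ▸ h2⟩
  simp_rw [hR]
  exact (Finset.sum_fiberwise P (fun p => p.1.comp ψ₁) (fun p => weight w p.1 * weight w p.2)).symm
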